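/- Let n be a positive integer, θ ∈ (0,1], and a ∈ ℝ^n. For α ∈ (0,1) let Q_α(a) = inf{η ∈ ℝ : (1/n)·#{i : a_i > η} ≤ α} be the (1−α)-quantile of the empirical measure (1/n)∑_{i=1}^n δ_{a_i}. Then the (1−θ)-superquantile satisfies the dual representation (1/θ)∫_0^θ Q_α(a) dα = max_{π ∈ P_θ} ∑_{i=1}^n π_i a_i. -/

import Mathlib

open scoped BigOperators

noncomputable section

open Finset MeasureTheory

private lemma card_filter_comp_equiv {n : ℕ} (e : Fin n ≃ Fin n) (P : Fin n → Prop) [DecidablePred P] :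
    (univ.filter fun m => P (e m)).card = (univ.filter P).card := by
  classical
  rw [← Fintype.card_subtype, ← Fintype.card_subtype]
  exact Fintype.card_congr (e.subtypeEquiv fun m => Iff.rfl)

private lemma quantile_formula {n : ℕ} (hn : 0 < n) (b : Fin n → ℝ) (hb : Antitone b)
    (α : ℝ) (h0 : 0 ≤ α) (h1 : α < 1) :
    sInf {η : ℝ | ((univ.filter fun i => η < b i).card : ℝ) / n ≤ α}
      = b ⟨⌊α * n⌋₊, by
          rw [Nat.floor_lt (by positivity)]
          calc α * n < 1 * n := mul_lt_mul_of_pos_right h1 (by exact_mod_cast hn)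
            _ = n := one_mul _⟩ := by
  classical
  set m : ℕ := ⌊α * n⌋₊ with hm
  have hmn : m < n := by
    rw [hm, Nat.floor_lt (by positivity)]
    calc α * n < 1 * n := mul_lt_mul_of_pos_right h1 (by exact_mod_cast hn)
      _ = n := one_mul _
  have hn' : (0:ℝ) < n := by exact_mod_cast hn
  apply IsLeast.csInf_eq
  constructor
  · show ((univ.filter fun i => b ⟨m, hmn⟩ < b i).card : ℝ) / n ≤ α
    have hcard : (univ.filter fun i => b ⟨m, hmn⟩ < b i).card ≤ m := by
      have hmap : ∀ i ∈ univ.filter fun i => b ⟨m, hmn⟩ < b i, (i : Fin n).val ∈ Finset.range m := by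
        intro i hi
        simp only [mem_filter, mem_univ, true_and] at hi
        rw [Finset.mem_range]
        by_contra h
        push_neg at h
        exact absurd (hb (show (⟨m, hmn⟩ : Fin n) ≤ i from h)) (not_le.mpr hi)
      calc (univ.filter fun i => b ⟨m, hmn⟩ < b i).card
          ≤ (Finset.range m).card := Finset.card_le_card_of_injOn (fun i => i.val) hmap
            (fun x _ y _ h => Fin.val_injective h)
        _ = m := Finset.card_range m
    have h2 : ((univ.filter fun i => b ⟨m, hmn⟩ < b i).card : ℝ) ≤ α * n := by
      calc ((univ.filter fun i => b ⟨m, hmn⟩ < b i).card : ℝ) ≤ (m : ℝ) := by exact_mod_cast hcard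
        _ ≤ α * n := Nat.floor_le (by positivity)
    rw [div_le_iff₀ hn']
    linarith
  · intro η hη
    simp only [Set.mem_setOf_eq] at hη
    by_contra h
    push_neg at h
    have hsub : ∀ (k : ℕ) (hk : k < m + 1), (⟨k, lt_of_lt_of_le hk hmn⟩ : Fin n) ∈ univ.filter fun i => η < b i := by
      intro k hk
      simp only [mem_filter, mem_univ, true_and]
      have : b ⟨m, hmn⟩ ≤ b ⟨k, lt_of_lt_of_le hk hmn⟩ :=
        hb (show (⟨k, _⟩ : Fin n) ≤ ⟨m, hmn⟩ from Nat.lt_succ_iff.mp hk)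
      linarith
    have hcard : m + 1 ≤ (univ.filter fun i => η < b i).card := by
      calc m + 1 = (Finset.range (m+1)).card := (Finset.card_range _).symm
        _ ≤ (univ.filter fun i => η < b i).card := by
            apply Finset.card_le_card_of_injOn
              (fun k => if hk : k < m + 1 then (⟨k, lt_of_lt_of_le hk hmn⟩ : Fin n) else ⟨0, hn⟩)
            · intro k hk
              have hk' := Finset.mem_range.mp hk
              simp only [dif_pos hk']
              exact hsub k hk'
            · intro x hx y hy hxy
              have hx' := Finset.mem_range.mp hx
              have hy' := Finset.mem_range.mp hy
              simp only [dif_pos hx', dif_pos hy'] at hxy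
              simpa using hxy
    have hle : ((univ.filter fun i => η < b i).card : ℝ) ≤ α * n := by
      rw [div_le_iff₀ hn'] at hη; linarith
    have h3 : (m:ℝ) + 1 ≤ α * n := by
      calc (m:ℝ) + 1 = ((m+1 : ℕ) : ℝ) := by push_cast; ring
        _ ≤ ((univ.filter fun i => η < b i).card : ℝ) := by exact_mod_cast hcard
        _ ≤ α * n := hle
    have h4 := Nat.lt_floor_add_one (α * n)
    rw [← hm] at h4
    linarith

private lemma abel_ineq (n : ℕ) (d B : ℕ → ℝ)
    (hB : ∀ k, B (k+1) ≤ B k)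
    (hD : ∀ k ≤ n, 0 ≤ ∑ m ∈ range k, d m)
    (hDn : ∑ m ∈ range n, d m = 0) :
    0 ≤ ∑ m ∈ range n, d m * B m := by
  have key : ∀ N ≤ n, (∑ m ∈ range N, d m) * B N ≤ ∑ m ∈ range N, d m * B m := by
    intro N
    induction N with
    | zero => simp
    | succ N ih =>
      intro hN
      have hN' : N ≤ n := Nat.le_of_succ_le hN
      have h1 := ih hN'
      rw [Finset.sum_range_succ, Finset.sum_range_succ]
      calc (∑ m ∈ range N, d m + d N) * B (N+1)
          ≤ (∑ m ∈ range N, d m + d N) * B N := by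
            apply mul_le_mul_of_nonneg_left (hB N)
            have := hD (N+1) hN
            rwa [Finset.sum_range_succ] at this
        _ = (∑ m ∈ range N, d m) * B N + d N * B N := by ring
        _ ≤ _ := by linarith
  have := key n le_rfl
  rw [hDn, zero_mul] at this
  exact this

/-- Dual representation of the superquantile of the empirical measure of `a`:
the average of the `(1-α)`-quantiles over `α ∈ (0, θ)` equals the maximum of
`∑ i, π i * a i` over the polytope `P_θ`. -/
theorem superquantile_dual_representation
    (n : ℕ) (hn : 0 < n) (θ : ℝ) (hθ : θ ∈ Set.Ioc (0:ℝ) 1) (a : Fin n → ℝ) :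
    IsGreatest
      {x : ℝ | ∃ π : Fin n → ℝ, (∀ i, 0 ≤ π i) ∧ (∑ i, π i = 1) ∧
        (∀ i, π i ≤ 1 / (θ * n)) ∧ x = ∑ i, π i * a i}
      ((1 / θ) * ∫ α in (0:ℝ)..θ,
        sInf {η : ℝ | ((Finset.univ.filter (fun i => η < a i)).card : ℝ) / n ≤ α}) := by
  classical
  obtain ⟨hθ0, hθ1⟩ := hθ
  have hn' : (0:ℝ) < n := by exact_mod_cast hn
  set σ := Tuple.sort a with hσ
  set e : Fin n ≃ Fin n := Fin.revPerm.trans σ with he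
  set b : Fin n → ℝ := fun m => a (e m) with hbdef
  have hb : Antitone b := by
    intro m m' hmm'
    have h1 : (Fin.rev m' : Fin n) ≤ Fin.rev m := Fin.rev_le_rev.mpr hmm'
    have h2 := Tuple.monotone_sort a h1
    simpa [hbdef, he] using h2
  have hcount : ∀ η : ℝ, (univ.filter fun i => η < a i).card = (univ.filter fun i => η < b i).card :=
    fun η => (card_filter_comp_equiv e (fun i => η < a i)).symm
  set f : ℝ → ℝ := fun α => sInf {η : ℝ | ((Finset.univ.filter (fun i => η < a i)).card : ℝ) / n ≤ α} with hf
  have hfval : ∀ (α : ℝ), 0 ≤ α → α < 1 → ∀ (k : ℕ) (hk : k < n), ⌊α * n⌋₊ = k → f α = b ⟨k, hk⟩ := by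
    intro α h0 h1 k hk hfl
    have hset : {η : ℝ | ((Finset.univ.filter (fun i => η < a i)).card : ℝ) / n ≤ α}
        = {η : ℝ | ((univ.filter fun i => η < b i).card : ℝ) / n ≤ α} := by
      ext η; simp only [Set.mem_setOf_eq, hcount]
    show sInf _ = _
    rw [hset, quantile_formula hn b hb α h0 h1]
    exact congrArg b (Fin.ext hfl)
  -- breakpoints
  set x : ℕ → ℝ := fun k => min θ ((k : ℝ) / n) with hx
  have hx0 : x 0 = 0 := by simp [hx, min_eq_right hθ0.le]
  have hxn : x n = θ := by
    simp only [hx]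
    rw [div_self (ne_of_gt hn'), min_eq_left hθ1]
  have hxmono : Monotone x := by
    intro k l hkl
    exact min_le_min le_rfl (by gcongr <;> exact_mod_cast hkl)
  have hxle : ∀ k, x k ≤ θ := fun k => min_le_left _ _
  have hxnonneg : ∀ k, 0 ≤ x k := fun k => le_min hθ0.le (by positivity)
  have hxsub : ∀ k, x (k+1) - x k ≤ 1 / n := by
    intro k
    have hninv : (0:ℝ) ≤ 1/n := by positivity
    have h1 : x (k+1) ≤ x k + 1/n := by
      simp only [hx]
      push_cast
      have heq : ((k:ℝ)+1)/n = (k:ℝ)/n + 1/n := by ring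
      rw [heq]
      calc θ ⊓ ((k:ℝ)/n + 1/n) ≤ (θ + 1/n) ⊓ ((k:ℝ)/n + 1/n) :=
            min_le_min (by linarith) le_rfl
        _ = θ ⊓ ((k:ℝ)/n) + 1/n := min_add_add_right _ _ _
    linarith
  -- B : extended sorted values
  have hn1 : n - 1 < n := Nat.sub_lt hn one_pos
  set B : ℕ → ℝ := fun k => b ⟨min k (n-1), lt_of_le_of_lt (min_le_right _ _) hn1⟩ with hB
  have hBk : ∀ (k : ℕ) (hk : k < n), B k = b ⟨k, hk⟩ := by
    intro k hk
    have hmin : k ⊓ (n-1) = k := Nat.min_eq_left (by omega)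
    simp only [hB]
    exact congrArg b (Fin.ext hmin)
  have hBanti : ∀ k, B (k+1) ≤ B k := by
    intro k
    apply hb
    show (⟨min k (n-1), _⟩ : Fin n) ≤ ⟨min (k+1) (n-1), _⟩
    exact min_le_min (Nat.le_succ k) le_rfl
  -- a.e. value on each piece
  have hae : ∀ (k : ℕ), k < n → ∀ᵐ α : ℝ, α ∈ Set.uIoc (x k) (x (k+1)) → f α = B k := by
    intro k hk
    have hne : ∀ᵐ α : ℝ, α ≠ x (k+1) := by
      rw [MeasureTheory.ae_iff]
      simp only [not_ne_iff, Set.setOf_eq_eq_singleton]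
      exact Real.volume_singleton
    filter_upwards [hne] with α hα hmem
    rw [Set.uIoc_of_le (hxmono (Nat.le_succ k))] at hmem
    have hlt : α < x (k+1) := lt_of_le_of_ne hmem.2 hα
    have hxkθ : x k < θ := lt_of_lt_of_le (lt_trans hmem.1 hlt) (hxle _)
    have hxkval : x k = (k:ℝ)/n := by
      rcases min_cases θ ((k:ℝ)/n) with ⟨h1, _⟩ | ⟨h1, _⟩
      · exact absurd (h1 ▸ hxkθ) (lt_irrefl θ)
      · exact h1
    have hαk : (k:ℝ)/n < α := hxkval ▸ hmem.1
    have hαk1 : α < ((k:ℝ)+1)/n := by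
      have := lt_of_lt_of_le hlt (min_le_right θ _)
      push_cast at this
      exact this
    have hα0 : 0 ≤ α := le_of_lt (lt_of_le_of_lt (by positivity) hαk)
    have hα1 : α < 1 := lt_of_lt_of_le hlt (le_trans (min_le_left _ _) hθ1)
    have hfl : ⌊α * n⌋₊ = k := by
      rw [Nat.floor_eq_iff (by positivity)]
      constructor
      · calc (k:ℝ) = ((k:ℝ)/n) * n := by field_simp
          _ ≤ α * n := by gcongr
      · calc α * n < (((k:ℝ)+1)/n) * n := by gcongr
          _ = (k:ℝ) + 1 := by field_simp
    rw [hfval α hα0 hα1 k hk hfl, hBk k hk]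
  -- integrability of each piece
  have hint : ∀ k < n, IntervalIntegrable f volume (x k) (x (k+1)) := by
    intro k hk
    have hres : f =ᵐ[volume.restrict (Set.uIoc (x k) (x (k+1)))] (fun _ => B k) :=
      (ae_restrict_iff' measurableSet_uIoc).mpr (hae k hk)
    exact (intervalIntegrable_const).congr_ae hres.symm
  have hpiece : ∀ k < n, ∫ α in (x k)..(x (k+1)), f α = (x (k+1) - x k) * B k := by
    intro k hk
    rw [intervalIntegral.integral_congr_ae (g := fun _ => B k) (hae k hk)]
    simp [smul_eq_mul]
  have hint_eq : ∫ α in (0:ℝ)..θ, f α = ∑ k ∈ range n, (x (k+1) - x k) * B k := by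
    have htot := intervalIntegral.sum_integral_adjacent_intervals (a := x) (μ := volume) (n := n) hint
    rw [hx0, hxn] at htot
    rw [← htot]
    exact Finset.sum_congr rfl fun k hk => hpiece k (mem_range.mp hk)
  -- p
  set p : ℕ → ℝ := fun k => (x (k+1) - x k) / θ with hp
  have hpnonneg : ∀ k, 0 ≤ p k := fun k => div_nonneg (sub_nonneg.mpr (hxmono (Nat.le_succ k))) hθ0.le
  have hple : ∀ k, p k ≤ 1 / (θ * n) := by
    intro k
    have h1 : (x (k+1) - x k) / θ ≤ (1/n) / θ := by
      gcongr
      exact hxsub k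
    calc p k ≤ (1/n)/θ := h1
      _ = 1/(n*θ) := div_div 1 _ _
      _ = 1/(θ*n) := by rw [mul_comm]
  have hpsum : ∀ k, ∑ m ∈ range k, p m = x k / θ := by
    intro k
    have : ∀ m, p m = x (m+1)/θ - x m/θ := by
      intro m; simp only [hp]; rw [sub_div]
    calc ∑ m ∈ range k, p m = ∑ m ∈ range k, (x (m+1)/θ - x m/θ) :=
          Finset.sum_congr rfl fun m _ => this m
      _ = x k/θ - x 0/θ := Finset.sum_range_sub (fun m => x m / θ) k
      _ = x k/θ := by rw [hx0]; ring
  have hpsum_n : ∑ m ∈ range n, p m = 1 := by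
    rw [hpsum n, hxn, div_self (ne_of_gt hθ0)]
  -- reindexing helpers
  have hreindex : ∀ g : Fin n → ℝ,
      ∑ i, g i * a i = ∑ k ∈ range n, (if h : k < n then g (e ⟨k, h⟩) else 0) * B k := by
    intro g
    have h1 : ∑ i, g i * a i = ∑ m : Fin n, g (e m) * a (e m) :=
      (Equiv.sum_comp e (fun i => g i * a i)).symm
    rw [h1, ← Fin.sum_univ_eq_sum_range (fun k => (if h : k < n then g (e ⟨k, h⟩) else 0) * B k) n]
    apply Finset.sum_congr rfl
    intro m _
    rw [dif_pos m.isLt, hBk m.val m.isLt]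
  have hQsum : ∀ g : Fin n → ℝ,
      ∑ k ∈ range n, (if h : k < n then g (e ⟨k, h⟩) else 0) = ∑ i, g i := by
    intro g
    rw [← Fin.sum_univ_eq_sum_range (fun k => if h : k < n then g (e ⟨k, h⟩) else 0) n]
    rw [← Equiv.sum_comp e g]
    apply Finset.sum_congr rfl
    intro m _
    rw [dif_pos m.isLt]
  have hVeq : (1/θ) * ∑ k ∈ range n, (x (k+1) - x k) * B k = ∑ k ∈ range n, p k * B k := by
    rw [Finset.mul_sum]
    apply Finset.sum_congr rfl
    intro k _
    simp only [hp]
    ring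
  constructor
  · -- membership
    refine ⟨fun i => p ((e.symm i : Fin n) : ℕ), fun i => hpnonneg _, ?_, fun i => hple _, ?_⟩
    · rw [← hQsum (fun i => p ((e.symm i : Fin n) : ℕ))]
      rw [← hpsum_n]
      apply Finset.sum_congr rfl
      intro k hk
      rw [dif_pos (mem_range.mp hk)]
      simp
    · show (1/θ) * ∫ α in (0:ℝ)..θ, f α = _
      rw [hint_eq, hVeq, hreindex (fun i => p ((e.symm i : Fin n) : ℕ))]
      apply Finset.sum_congr rfl
      intro k hk
      rw [dif_pos (mem_range.mp hk)]
      simp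
  · -- upper bound
    rintro y ⟨π, hπ0, hπ1, hπ2, rfl⟩
    set Q : ℕ → ℝ := fun k => if h : k < n then π (e ⟨k, h⟩) else 0 with hQ
    have hQnonneg : ∀ k, 0 ≤ Q k := by
      intro k
      simp only [hQ]
      split
      · exact hπ0 _
      · exact le_refl 0
    have hQle : ∀ k, Q k ≤ 1/(θ*n) := by
      intro k
      simp only [hQ]
      split
      · exact hπ2 _
      · positivity
    have hQsum_n : ∑ k ∈ range n, Q k = 1 := by rw [hQ, hQsum π, hπ1]
    have hD : ∀ k ≤ n, 0 ≤ ∑ m ∈ range k, (p m - Q m) := by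
      intro k hk
      rw [Finset.sum_sub_distrib, hpsum k, sub_nonneg, le_div_iff₀ hθ0]
      apply le_min
      · have h1 : ∑ m ∈ range k, Q m ≤ ∑ m ∈ range n, Q m :=
          Finset.sum_le_sum_of_subset_of_nonneg (Finset.range_subset_range.mpr hk)
            (fun m _ _ => hQnonneg m)
        rw [hQsum_n] at h1
        nlinarith
      · have h1 : ∑ m ∈ range k, Q m ≤ ∑ m ∈ range k, 1/(θ*n) :=
          Finset.sum_le_sum (fun m _ => hQle m)
        rw [Finset.sum_const, Finset.card_range, nsmul_eq_mul] at h1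
        have h2 : (k:ℝ) * (1/(θ*n)) * θ = k/n := by
          field_simp <;> ring
        nlinarith
    have hDn : ∑ m ∈ range n, (p m - Q m) = 0 := by
      rw [Finset.sum_sub_distrib, hpsum_n, hQsum_n, sub_self]
    have habel := abel_ineq n (fun m => p m - Q m) B hBanti hD hDn
    have hsplit : ∑ m ∈ range n, (p m - Q m) * B m
        = ∑ m ∈ range n, p m * B m - ∑ m ∈ range n, Q m * B m := by
      rw [← Finset.sum_sub_distrib]
      exact Finset.sum_congr rfl fun m _ => by ring
    rw [hsplit] at habel
    show ∑ i, π i * a i ≤ (1/θ) * ∫ α in (0:ℝ)..θ, f α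
    rw [hint_eq, hVeq, hreindex π]
    have hQB : ∑ k ∈ range n, (if h : k < n then π (e ⟨k, h⟩) else 0) * B k
        = ∑ k ∈ range n, Q k * B k := rfl
    rw [hQB]
    linarith
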